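/- For an integer m ≥ 1, the sparing number of the m-friendship graph K_1 + mK_2 is m. -/

import Mathlib

open Pointwise

/-- The induced set-label on (potential) edges: the sumset of the end-vertex labels. -/
def edgeLabel {V : Type*} (f : V → Finset ℕ) : Sym2 V → Finset ℕ :=
  Sym2.lift ⟨fun u v => f u + f v, fun u v => add_comm (f u) (f v)⟩

/-- An integer additive set-indexer (IASI) of a simple graph `G`: an injective assignment
of nonempty finite sets of non-negative integers to the vertices such that the induced
sumset-labeling of the edges is also injective. -/
structure IsIASI {V : Type*} (G : SimpleGraph V) (f : V → Finset ℕ) : Prop where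
  nonempty : ∀ v, (f v).Nonempty
  inj : Function.Injective f
  edgeInj : Set.InjOn (edgeLabel f) G.edgeSet

/-- A weak IASI: an IASI for which every edge label has cardinality equal to the maximum of
the cardinalities of the labels of its end vertices. -/
structure IsWeakIASI {V : Type*} (G : SimpleGraph V) (f : V → Finset ℕ) extends
    IsIASI G f : Prop where
  weak : ∀ ⦃u v⦄, G.Adj u v → (f u + f v).card = max (f u).card (f v).card

/-- The number of mono-indexed edges of `G` under the labeling `f`, i.e. the number of
edges whose set-label is a singleton. -/
noncomputable def monoEdgeCount {V : Type*} (G : SimpleGraph V) (f : V → Finset ℕ) : ℕ :=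
  {e ∈ G.edgeSet | (edgeLabel f e).card = 1}.ncard

/-- The sparing number of `G`: the minimum number of mono-indexed edges taken over all
weak IASIs of `G`. -/
noncomputable def sparingNumber {V : Type*} (G : SimpleGraph V) : ℕ :=
  sInf {k | ∃ f : V → Finset ℕ, IsWeakIASI G f ∧ monoEdgeCount G f = k}

/-- The join `G + H` of two graphs on disjoint vertex sets: all vertices and edges of
`G` and `H`, together with every edge joining a vertex of `G` to a vertex of `H`. -/
def graphJoin {V W : Type*} (G : SimpleGraph V) (H : SimpleGraph W) :
    SimpleGraph (V ⊕ W) where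
  Adj x y :=
    match x, y with
    | Sum.inl a, Sum.inl b => G.Adj a b
    | Sum.inr a, Sum.inr b => H.Adj a b
    | Sum.inl _, Sum.inr _ => True
    | Sum.inr _, Sum.inl _ => True
  symm := by
    constructor
    rintro (a | a) (b | b) h
    · exact G.adj_symm h
    · trivial
    · trivial
    · exact H.adj_symm h
  loopless := by
    constructor
    rintro (a | a) h
    · exact G.irrefl h
    · exact H.irrefl h

/-- The disjoint union `mG` of `m` copies of the graph `G`. -/
def graphCopies {V : Type*} (m : ℕ) (G : SimpleGraph V) : SimpleGraph (Fin m × V) where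
  Adj x y := x.1 = y.1 ∧ G.Adj x.2 y.2
  symm := by
    constructor
    rintro ⟨i, u⟩ ⟨j, v⟩ ⟨h1, h2⟩
    exact ⟨h1.symm, G.adj_symm h2⟩
  loopless := by
    constructor
    rintro ⟨i, u⟩ ⟨-, h⟩
    exact G.irrefl h

/-! ### Auxiliary sumset lemmas -/

lemma card_add_lt_of_two_le {A B : Finset ℕ} (hA : 2 ≤ A.card) (hB : 2 ≤ B.card) :
    max A.card B.card < (A + B).card := by
  have key : ∀ A B : Finset ℕ, 2 ≤ A.card → 2 ≤ B.card → A.card < (A + B).card := by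
    intro A B hA hB
    have hAne : A.Nonempty := Finset.card_pos.mp (by omega)
    have hBne : B.Nonempty := Finset.card_pos.mp (by omega)
    have hb : B.min' hBne < B.max' hBne := Finset.min'_lt_max'_of_card _ (by omega)
    set S := A.image (· + B.min' hBne) with hS
    have hcard : S.card = A.card := Finset.card_image_of_injective _ (add_left_injective _)
    have hsub : insert (A.max' hAne + B.max' hBne) S ⊆ A + B := by
      intro x hx
      rcases Finset.mem_insert.mp hx with h | h
      · exact h ▸ Finset.add_mem_add (A.max'_mem hAne) (B.max'_mem hBne)
      · obtain ⟨a, ha, rfl⟩ := Finset.mem_image.mp h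
        exact Finset.add_mem_add ha (B.min'_mem hBne)
    have hnot : A.max' hAne + B.max' hBne ∉ S := by
      intro h
      obtain ⟨a, ha, heq⟩ := Finset.mem_image.mp h
      have := A.le_max' a ha
      omega
    have := Finset.card_le_card hsub
    rw [Finset.card_insert_of_notMem hnot, hcard] at this
    omega
  exact max_lt_iff.mpr ⟨key A B hA hB, by rw [add_comm]; exact key B A hB hA⟩

lemma weak_one {A B : Finset ℕ} (hA : A.Nonempty) (hB : B.Nonempty)
    (h : (A + B).card = max A.card B.card) : A.card = 1 ∨ B.card = 1 := by
  by_contra hc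
  push_neg at hc
  obtain ⟨hc1, hc2⟩ := hc
  have := hA.card_pos
  have := hB.card_pos
  have := card_add_lt_of_two_le (A := A) (B := B) (by omega) (by omega)
  omega

lemma card_add_eq_one {A B : Finset ℕ} (hA : A.Nonempty) (hB : B.Nonempty) :
    (A + B).card = 1 ↔ A.card = 1 ∧ B.card = 1 := by
  constructor
  · intro h
    have h1 := Finset.card_le_card_add_right (s := A) hB
    have h2 := Finset.card_le_card_add_left (t := B) hA
    have := hA.card_pos
    have := hB.card_pos
    omega
  · rintro ⟨h1, h2⟩
    obtain ⟨a, rfl⟩ := Finset.card_eq_one.mp h1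
    obtain ⟨b, rfl⟩ := Finset.card_eq_one.mp h2
    simp [Finset.singleton_add_singleton]

lemma pair_add_singleton (a : ℕ) : ({0, 1} : Finset ℕ) + {a} = {a, a + 1} := by
  ext x
  simp [Finset.mem_add]
  omega

lemma pair_eq_pair {a b : ℕ} (h : ({a, a + 1} : Finset ℕ) = {b, b + 1}) : a = b := by
  have h1 : a ∈ ({b, b + 1} : Finset ℕ) := h ▸ Finset.mem_insert_self _ _
  have h2 : b ∈ ({a, a + 1} : Finset ℕ) := h.symm ▸ Finset.mem_insert_self _ _
  simp at h1 h2
  omega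

lemma edgeLabel_mk {V : Type*} (f : V → Finset ℕ) (a b : V) :
    edgeLabel f s(a, b) = f a + f b := rfl

lemma ncard_range_fin {α : Type*} {m : ℕ} (g : Fin m → α) (hg : Function.Injective g) :
    (Set.range g).ncard = m := by
  rw [← Set.image_univ, Set.ncard_image_of_injective _ hg, Set.ncard_univ,
    Nat.card_eq_fintype_card, Fintype.card_fin]

lemma le_ncard_of_inj {α : Type*} {m : ℕ} {S : Set α} (hfin : S.Finite)
    (g : Fin m → α) (hg : Function.Injective g) (hsub : Set.range g ⊆ S) : m ≤ S.ncard := by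
  rw [← ncard_range_fin g hg]
  exact Set.ncard_le_ncard hsub hfin

/-! ### The friendship graph -/

abbrev FG (m : ℕ) : SimpleGraph (Fin 1 ⊕ Fin m × Fin 2) :=
  graphJoin (⊥ : SimpleGraph (Fin 1)) (graphCopies m (⊤ : SimpleGraph (Fin 2)))

/-- The witness labeling. -/
def wfn (m : ℕ) : (Fin 1 ⊕ Fin m × Fin 2) → Finset ℕ
  | Sum.inl _ => {0, 1}
  | Sum.inr (i, t) => {4 * i.val + 2 + t.val}

lemma card01 : ({0, 1} : Finset ℕ).card = 2 := by decide

lemma wfn_weak (m : ℕ) : IsWeakIASI (FG m) (wfn m) := by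
  refine ⟨⟨?nonempty, ?inj, ?edgeInj⟩, ?weak⟩
  case weak =>
    rintro (a | ⟨i, t⟩) (b | ⟨j, s⟩) hadj
    · exact False.elim hadj
    · simp only [wfn]
      rw [pair_add_singleton, Finset.card_pair (by omega), card01, Finset.card_singleton]
      decide
    · simp only [wfn]
      rw [add_comm ({4 * i.val + 2 + t.val} : Finset ℕ) {0, 1}, pair_add_singleton,
        Finset.card_pair (by omega), card01, Finset.card_singleton]
      decide
    · simp only [wfn]
      rw [Finset.singleton_add_singleton, Finset.card_singleton, Finset.card_singleton,
        Finset.card_singleton]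
      decide
  case nonempty =>
    rintro (a | ⟨i, t⟩) <;> simp [wfn]
  case inj =>
    rintro (a | ⟨i, t⟩) (b | ⟨j, s⟩) h
    · exact congrArg Sum.inl (Subsingleton.elim a b)
    · exfalso
      have hcard := congrArg Finset.card h
      simp only [wfn, card01, Finset.card_singleton] at hcard
      omega
    · exfalso
      have hcard := congrArg Finset.card h
      simp only [wfn, card01, Finset.card_singleton] at hcard
      omega
    · simp only [wfn, Finset.singleton_inj] at h
      have hi : i.val = j.val ∧ t.val = s.val := by
        have := t.isLt; have := s.isLt; omega
      exact congrArg Sum.inr (Prod.ext (Fin.ext hi.1) (Fin.ext hi.2))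
  case edgeInj =>
    intro e he e' he' heq
    induction e using Sym2.ind with
    | _ x y =>
    induction e' using Sym2.ind with
    | _ z w =>
    rw [SimpleGraph.mem_edgeSet] at he he'
    rw [edgeLabel_mk, edgeLabel_mk] at heq
    rcases x with a | ⟨i, t⟩ <;> rcases y with b | ⟨i', t'⟩ <;>
      rcases z with c | ⟨j, s⟩ <;> rcases w with d | ⟨j', s'⟩
    all_goals first
      | exact False.elim he
      | exact False.elim he'
      | skip
    all_goals simp only [wfn] at heq
    · -- (inl a, inr (i',t')) vs (inl c, inr (j',s'))
      rw [pair_add_singleton, pair_add_singleton] at heq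
      have h := pair_eq_pair heq
      have := t'.isLt; have := s'.isLt
      have hv : i'.val = j'.val ∧ t'.val = s'.val := by omega
      rw [Subsingleton.elim a c, show i' = j' from Fin.ext hv.1, show t' = s' from Fin.ext hv.2]
    · -- (inl a, inr (i',t')) vs (inr (j,s), inl d)
      rw [add_comm ({4 * j.val + 2 + s.val} : Finset ℕ) {0, 1}, pair_add_singleton,
        pair_add_singleton] at heq
      have h := pair_eq_pair heq
      have := t'.isLt; have := s.isLt
      have hv : i'.val = j.val ∧ t'.val = s.val := by omega
      rw [Sym2.eq_swap (a := Sum.inr (j, s))]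
      rw [Subsingleton.elim a d, show i' = j from Fin.ext hv.1, show t' = s from Fin.ext hv.2]
    · -- (inl a, inr) vs (inr, inr) : card clash
      exfalso
      rw [pair_add_singleton, Finset.singleton_add_singleton] at heq
      have hcard := congrArg Finset.card heq
      rw [Finset.card_pair (by omega), Finset.card_singleton] at hcard
      omega
    · -- (inr (i,t), inl b) vs (inl c, inr (j',s'))
      rw [add_comm ({4 * i.val + 2 + t.val} : Finset ℕ) {0, 1}, pair_add_singleton,
        pair_add_singleton] at heq
      have h := pair_eq_pair heq
      have := t.isLt; have := s'.isLt
      have hv : i.val = j'.val ∧ t.val = s'.val := by omega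
      rw [Sym2.eq_swap (a := Sum.inr (i, t))]
      rw [Subsingleton.elim b c, show i = j' from Fin.ext hv.1, show t = s' from Fin.ext hv.2]
    · -- (inr, inl) vs (inr, inl)
      rw [add_comm ({4 * i.val + 2 + t.val} : Finset ℕ) {0, 1},
        add_comm ({4 * j.val + 2 + s.val} : Finset ℕ) {0, 1}, pair_add_singleton,
        pair_add_singleton] at heq
      have h := pair_eq_pair heq
      have := t.isLt; have := s.isLt
      have hv : i.val = j.val ∧ t.val = s.val := by omega
      rw [Subsingleton.elim b d, show i = j from Fin.ext hv.1, show t = s from Fin.ext hv.2]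
    · -- (inr, inl) vs (inr, inr) : card clash
      exfalso
      rw [add_comm ({4 * i.val + 2 + t.val} : Finset ℕ) {0, 1}, pair_add_singleton,
        Finset.singleton_add_singleton] at heq
      have hcard := congrArg Finset.card heq
      rw [Finset.card_pair (by omega), Finset.card_singleton] at hcard
      omega
    · -- (inr, inr) vs (inl, inr) : card clash
      exfalso
      rw [Finset.singleton_add_singleton, pair_add_singleton] at heq
      have hcard := congrArg Finset.card heq
      rw [Finset.card_singleton, Finset.card_pair (by omega)] at hcard
      omega
    · -- (inr, inr) vs (inr, inl) : card clash
      exfalso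
      rw [Finset.singleton_add_singleton,
        add_comm ({4 * j.val + 2 + s.val} : Finset ℕ) {0, 1}, pair_add_singleton] at heq
      have hcard := congrArg Finset.card heq
      rw [Finset.card_singleton, Finset.card_pair (by omega)] at hcard
      omega
    · -- (inr (i,t), inr (i',t')) vs (inr (j,s), inr (j',s'))
      obtain ⟨hii, htt⟩ := he
      obtain ⟨hjj, hss⟩ := he'
      rw [Finset.singleton_add_singleton, Finset.singleton_add_singleton] at heq
      have h := Finset.singleton_injective heq
      have hii' : i.val = i'.val := congrArg Fin.val hii
      have hjj' : j.val = j'.val := congrArg Fin.val hjj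
      have ht : t.val ≠ t'.val := fun hh => htt (Fin.ext hh)
      have hs : s.val ≠ s'.val := fun hh => hss (Fin.ext hh)
      have h2 := t.isLt; have h3 := t'.isLt; have h4 := s.isLt; have h5 := s'.isLt
      have hij : i.val = j.val := by omega
      have hcases : (t.val = s.val ∧ t'.val = s'.val) ∨ (t.val = s'.val ∧ t'.val = s.val) := by
        omega
      have hi'j' : i'.val = j'.val := by omega
      rcases hcases with ⟨h6, h7⟩ | ⟨h6, h7⟩
      · rw [show i = j from Fin.ext hij, show i' = j' from Fin.ext hi'j',
          show t = s from Fin.ext h6, show t' = s' from Fin.ext h7]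
      · rw [Sym2.eq_swap (a := Sum.inr (j, s))]
        have hi'j : i'.val = j.val := by omega
        have hij' : i.val = j'.val := by omega
        rw [show i = j' from Fin.ext hij', show i' = j from Fin.ext hi'j,
          show t = s' from Fin.ext h6, show t' = s from Fin.ext h7]

/-- The mono edges of the witness labeling: the outer edges. -/
def ge' (m : ℕ) (i : Fin m) : Sym2 (Fin 1 ⊕ Fin m × Fin 2) :=
  s(Sum.inr (i, 0), Sum.inr (i, 1))

lemma ge'_inj (m : ℕ) : Function.Injective (ge' m) := by
  intro i j h
  rw [ge', ge', Sym2.eq_iff] at h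
  rcases h with ⟨h, -⟩ | ⟨h, -⟩
  · exact congrArg Prod.fst (Sum.inr_injective h)
  · exfalso
    have := congrArg Prod.snd (Sum.inr_injective h)
    exact absurd this Fin.zero_ne_one

lemma wfn_count (m : ℕ) : monoEdgeCount (FG m) (wfn m) = m := by
  have hset : {e ∈ (FG m).edgeSet | (edgeLabel (wfn m) e).card = 1} = Set.range (ge' m) := by
    apply Set.Subset.antisymm
    · intro e he
      induction e using Sym2.ind with
      | _ x y =>
      obtain ⟨he, hcard⟩ := he
      rw [SimpleGraph.mem_edgeSet] at he
      rw [edgeLabel_mk] at hcard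
      rcases x with a | ⟨i, t⟩ <;> rcases y with b | ⟨j, s⟩
      · exact False.elim he
      · exfalso
        simp only [wfn] at hcard
        rw [pair_add_singleton, Finset.card_pair (by omega)] at hcard
        omega
      · exfalso
        simp only [wfn] at hcard
        rw [add_comm ({4 * i.val + 2 + t.val} : Finset ℕ) {0, 1}, pair_add_singleton,
          Finset.card_pair (by omega)] at hcard
        omega
      · obtain ⟨hij, hts⟩ := he
        refine ⟨i, ?_⟩
        have ht2 := t.isLt; have hs2 := s.isLt
        have hts' : t.val ≠ s.val := fun hh => hts (Fin.ext hh)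
        rw [ge', show j = i from (Fin.ext (congrArg Fin.val hij)).symm]
        rcases (show (t.val = 0 ∧ s.val = 1) ∨ (t.val = 1 ∧ s.val = 0) by omega) with
          ⟨h1, h2⟩ | ⟨h1, h2⟩
        · rw [show t = 0 from Fin.ext h1, show s = 1 from Fin.ext h2]
        · rw [show t = 1 from Fin.ext h1, show s = 0 from Fin.ext h2, Sym2.eq_swap]
    · rintro e ⟨i, rfl⟩
      refine ⟨(SimpleGraph.mem_edgeSet _).mpr ⟨rfl, Fin.zero_ne_one⟩, ?_⟩
      rw [ge', edgeLabel_mk]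
      simp only [wfn]
      rw [Finset.singleton_add_singleton]
      exact Finset.card_singleton _
  rw [monoEdgeCount, hset, ncard_range_fin _ (ge'_inj m)]

lemma friendship_lower (m : ℕ) (f : (Fin 1 ⊕ Fin m × Fin 2) → Finset ℕ)
    (hf : IsWeakIASI (FG m) f) : m ≤ monoEdgeCount (FG m) f := by
  have hne := hf.nonempty
  rw [monoEdgeCount]
  by_cases hc : (f (Sum.inl 0)).card = 1
  · have key : ∀ i : Fin m, ∃ t : Fin 2, (f (Sum.inr (i, t))).card = 1 := by
      intro i
      have hadj : (FG m).Adj (Sum.inr (i, 0)) (Sum.inr (i, 1)) := ⟨rfl, Fin.zero_ne_one⟩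
      rcases weak_one (hne _) (hne _) (hf.weak hadj) with h | h
      · exact ⟨0, h⟩
      · exact ⟨1, h⟩
    choose t ht using key
    apply le_ncard_of_inj (Set.toFinite _) (fun i => s(Sum.inl 0, Sum.inr (i, t i)))
    · intro i j h
      rw [Sym2.eq_iff] at h
      rcases h with ⟨-, h⟩ | ⟨h, -⟩
      · exact congrArg Prod.fst (Sum.inr_injective h)
      · exact absurd h (by simp)
    · rintro e ⟨i, rfl⟩
      refine ⟨(SimpleGraph.mem_edgeSet _).mpr trivial, ?_⟩
      rw [edgeLabel_mk]
      exact (card_add_eq_one (hne _) (hne _)).mpr ⟨hc, ht i⟩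
  · have houter : ∀ (i : Fin m) (t : Fin 2), (f (Sum.inr (i, t))).card = 1 := by
      intro i t
      have hadj : (FG m).Adj (Sum.inl 0) (Sum.inr (i, t)) := trivial
      rcases weak_one (hne _) (hne _) (hf.weak hadj) with h | h
      · exact absurd h hc
      · exact h
    apply le_ncard_of_inj (Set.toFinite _) (ge' m) (ge'_inj m)
    rintro e ⟨i, rfl⟩
    refine ⟨(SimpleGraph.mem_edgeSet _).mpr ⟨rfl, Fin.zero_ne_one⟩, ?_⟩
    rw [ge', edgeLabel_mk]
    exact (card_add_eq_one (hne _) (hne _)).mpr ⟨houter _ _, houter _ _⟩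

/-- For `m ≥ 1`, the sparing number of the `m`-friendship graph `K_1 + mK_2` is `m`. -/
theorem friendship_sparingNumber (m : ℕ) (hm : 1 ≤ m) :
    sparingNumber
      (graphJoin (⊥ : SimpleGraph (Fin 1))
        (graphCopies m (⊤ : SimpleGraph (Fin 2)))) = m := by
  have hmem : m ∈ {k | ∃ f : (Fin 1 ⊕ Fin m × Fin 2) → Finset ℕ,
      IsWeakIASI (FG m) f ∧ monoEdgeCount (FG m) f = k} :=
    ⟨wfn m, wfn_weak m, wfn_count m⟩
  apply le_antisymm
  · exact Nat.sInf_le hmem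
  · refine le_csInf ⟨m, hmem⟩ ?_
    rintro k ⟨f, hf, rfl⟩
    exact friendship_lower m f hf
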